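/- The map F_ε is Lipschitz on Ω with Lipschitz constant at most 2−ε, and its inverse is Lipschitz on Ω with constant at most 1/ε (in particular for fixed ε > 0 it is a bi-Lipschitz homeomorphism of Ω). -/

import Mathlib

open Metric

private lemma radial_norm' {E : Type*} [NormedAddCommGroup E] [InnerProductSpace ℝ E]
    (f : ℝ → ℝ) (h0 : f 0 = 0) (z : E) (hnn : 0 ≤ f ‖z‖) :
    ‖(f ‖z‖ / ‖z‖) • z‖ = f ‖z‖ := by
  rcases eq_or_ne z 0 with rfl | hz
  · simp [h0]
  · have hz' : (0:ℝ) < ‖z‖ := norm_pos_iff.2 hz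
    rw [norm_smul, Real.norm_eq_abs, abs_of_nonneg (div_nonneg hnn hz'.le),
      div_mul_cancel₀ _ hz'.ne']

private lemma radial_lip' {E : Type*} [NormedAddCommGroup E] [InnerProductSpace ℝ E]
    (f : ℝ → ℝ) (K : NNReal) (R : ℝ) (hR : 0 ≤ R)
    (hnn : ∀ r, 0 ≤ r → r ≤ R → 0 ≤ f r)
    (hKr : ∀ r, 0 ≤ r → r ≤ R → f r ≤ K * r)
    (hlip : ∀ a b, 0 ≤ a → a ≤ R → 0 ≤ b → b ≤ R → |f a - f b| ≤ K * |a - b|) :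
    LipschitzOnWith K (fun x : E => (f ‖x‖ / ‖x‖) • x) (closedBall 0 R) := by
  have h0 : f 0 = 0 := le_antisymm (by simpa using hKr 0 le_rfl hR) (hnn 0 le_rfl hR)
  rw [lipschitzOnWith_iff_dist_le_mul]
  intro x hx y hy
  rw [mem_closedBall, dist_zero_right] at hx hy
  rw [dist_eq_norm, dist_eq_norm]
  rcases eq_or_ne x 0 with rfl | hx0
  · simp only [norm_zero, h0, zero_div, zero_smul, zero_sub, norm_neg]
    rw [radial_norm' f h0 y (hnn _ (norm_nonneg _) hy)]
    exact hKr _ (norm_nonneg _) hy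
  rcases eq_or_ne y 0 with rfl | hy0
  · simp only [norm_zero, h0, zero_div, zero_smul, sub_zero]
    rw [radial_norm' f h0 x (hnn _ (norm_nonneg _) hx)]
    exact hKr _ (norm_nonneg _) hx
  · have ha : (0:ℝ) < ‖x‖ := norm_pos_iff.2 hx0
    have hb : (0:ℝ) < ‖y‖ := norm_pos_iff.2 hy0
    set a := ‖x‖ with ha'
    set b := ‖y‖ with hb'
    set s := (inner ℝ x y : ℝ) with hs'
    have expand : ∀ c d : ℝ, ‖c • x - d • y‖^2 = c^2*a^2 - 2*(c*d)*s + d^2*b^2 := by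
      intro c d
      rw [@norm_sub_sq_real, norm_smul, norm_smul, real_inner_smul_left, real_inner_smul_right,
        mul_pow, mul_pow, Real.norm_eq_abs, Real.norm_eq_abs, sq_abs, sq_abs]
      ring
    have hxy : ‖x - y‖^2 = a^2 - 2*s + b^2 := by
      have := expand 1 1; simpa using this
    set u := f a / a with hu'
    set v := f b / b with hv'
    have hu : f a = u * a := by rw [hu', div_mul_cancel₀ _ ha.ne']
    have hv : f b = v * b := by rw [hv', div_mul_cancel₀ _ hb.ne']
    have h1 : (u*a - v*b)^2 ≤ (K:ℝ)^2 * (a-b)^2 := by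
      have h := hlip a b ha.le hx hb.le hy
      rw [hu, hv] at h
      have h1 : (u*a - v*b)^2 ≤ ((K:ℝ) * |a-b|)^2 := by
        rw [← sq_abs (u*a - v*b)]
        exact pow_le_pow_left₀ (abs_nonneg _) h 2
      rwa [mul_pow, sq_abs] at h1
    have hfa : 0 ≤ u * a := hu ▸ hnn a ha.le hx
    have hfb : 0 ≤ v * b := hv ▸ hnn b hb.le hy
    have hKa : u * a ≤ K * a := hu ▸ hKr a ha.le hx
    have hKb : v * b ≤ K * b := hv ▸ hKr b hb.le hy
    have h2 : (u*a + v*b)^2 ≤ (K:ℝ)^2 * (a+b)^2 := by nlinarith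
    have hs1 : s ≤ a * b := real_inner_le_norm x y
    have hs2 : -(a*b) ≤ s := by
      have := abs_le.mp (abs_real_inner_le_norm x y)
      linarith [this.1]
    have hA : 0 ≤ (K:ℝ)^2*(a-b)^2 - (u*a - v*b)^2 := by linarith
    have hB : 0 ≤ (K:ℝ)^2*(a+b)^2 - (u*a + v*b)^2 := by linarith
    have main : ‖u • x - v • y‖^2 ≤ ((K:ℝ) * ‖x - y‖)^2 := by
      rw [expand, mul_pow, hxy]
      nlinarith [mul_nonneg hA (by linarith : (0:ℝ) ≤ a*b + s),
        mul_nonneg hB (by linarith : (0:ℝ) ≤ a*b - s), mul_pos ha hb]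
    have := Real.sqrt_le_sqrt main
    rwa [Real.sqrt_sq (norm_nonneg _), Real.sqrt_sq (by positivity)] at this

private noncomputable def phi (ε r : ℝ) : ℝ := if r ≤ 1 then ε*r else (2-ε)*r - (2-2*ε)
private noncomputable def psi (ε r : ℝ) : ℝ := if r ≤ ε then r/ε else (r + (2-2*ε))/(2-ε)

private lemma lip_of_onesided {f : ℝ → ℝ} {K : ℝ}
    (h : ∀ a b, 0 ≤ a → a ≤ b → f a ≤ f b ∧ f b - f a ≤ K * (b - a)) :
    ∀ a b, 0 ≤ a → 0 ≤ b → |f a - f b| ≤ K * |a - b| := by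
  intro a b ha hb
  rcases le_total a b with hab | hab
  · obtain ⟨h1, h2⟩ := h a b ha hab
    rw [abs_of_nonpos (by linarith), abs_of_nonpos (by linarith)]
    linarith
  · obtain ⟨h1, h2⟩ := h b a hb hab
    rw [abs_of_nonneg (by linarith), abs_of_nonneg (by linarith)]
    linarith

section scalar
variable {ε : ℝ} (hε0 : 0 < ε) (hε1 : ε < 1)
include hε0 hε1

set_option linter.unusedSectionVars false

private lemma phi_zero : phi ε 0 = 0 := by simp [phi]

private lemma phi_nonneg {r : ℝ} (h0 : 0 ≤ r) : 0 ≤ phi ε r := by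
  unfold phi; split_ifs with h
  · positivity
  · nlinarith

private lemma phi_pos {r : ℝ} (h0 : 0 < r) : 0 < phi ε r := by
  unfold phi; split_ifs with h
  · positivity
  · nlinarith

private lemma phi_le {r : ℝ} (h0 : 0 ≤ r) : phi ε r ≤ (2-ε) * r := by
  unfold phi; split_ifs with h
  · nlinarith
  · nlinarith

private lemma phi_lip {a b : ℝ} (ha0 : 0 ≤ a) (hb0 : 0 ≤ b) :
    |phi ε a - phi ε b| ≤ (2-ε) * |a - b| := by
  refine lip_of_onesided (fun a b ha hab => ?_) a b ha0 hb0
  unfold phi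
  rcases le_or_gt a 1 with hA | hA <;> rcases le_or_gt b 1 with hB | hB
  · rw [if_pos hA, if_pos hB]
    constructor <;> nlinarith
  · rw [if_pos hA, if_neg (not_le.2 hB)]
    constructor <;> nlinarith
  · exact absurd (hA.trans_le hab) (not_lt.2 hB)
  · rw [if_neg (not_le.2 hA), if_neg (not_le.2 hB)]
    constructor <;> nlinarith

private lemma psi_zero : psi ε 0 = 0 := by simp [psi, hε0.le]

private lemma psi_nonneg {r : ℝ} (h0 : 0 ≤ r) : 0 ≤ psi ε r := by
  unfold psi; split_ifs with h
  · positivity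
  · push_neg at h
    have h2 : (0:ℝ) < 2 - ε := by linarith
    have h3 : (0:ℝ) ≤ r + (2-2*ε) := by linarith
    positivity

private lemma psi_pos {r : ℝ} (h0 : 0 < r) : 0 < psi ε r := by
  unfold psi; split_ifs with h
  · positivity
  · push_neg at h
    have h2 : (0:ℝ) < 2 - ε := by linarith
    have h3 : (0:ℝ) < r + (2-2*ε) := by linarith
    positivity

private lemma psi_le {r : ℝ} (h0 : 0 ≤ r) : psi ε r ≤ ε⁻¹ * r := by
  unfold psi; split_ifs with h
  · rw [div_eq_inv_mul]
  · push_neg at h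
    have h2 : (0:ℝ) < 2 - ε := by linarith
    rw [← div_eq_inv_mul, div_le_div_iff₀ h2 hε0]
    nlinarith [mul_nonneg (by linarith : (0:ℝ) ≤ 1-ε) (by linarith : (0:ℝ) ≤ r-ε)]

private lemma psi_lip {a b : ℝ} (ha0 : 0 ≤ a) (hb0 : 0 ≤ b) :
    |psi ε a - psi ε b| ≤ ε⁻¹ * |a - b| := by
  have h2 : (0:ℝ) < 2 - ε := by linarith
  refine lip_of_onesided (fun a b ha hab => ?_) a b ha0 hb0
  unfold psi
  rcases le_or_gt a ε with hA | hA <;> rcases le_or_gt b ε with hB | hB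
  · rw [if_pos hA, if_pos hB]
    constructor
    · gcongr
    · rw [div_sub_div_same, div_eq_inv_mul]
  · rw [if_pos hA, if_neg (not_le.2 hB)]
    have hb1 : (1:ℝ) ≤ (b + (2-2*ε))/(2-ε) := by rw [le_div_iff₀ h2]; linarith
    have ha1 : a/ε ≤ 1 := by rw [div_le_one hε0]; exact hA
    constructor
    · linarith
    · have key : (b + (2-2*ε))/(2-ε) ≤ b/ε := by
        rw [div_le_div_iff₀ h2 hε0]
        nlinarith [mul_nonneg (by linarith : (0:ℝ) ≤ 1-ε) (by linarith : (0:ℝ) ≤ b-ε)]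
      have : b/ε - a/ε = ε⁻¹ * (b - a) := by rw [div_sub_div_same, div_eq_inv_mul]
      linarith
  · exact absurd (hA.trans_le hab) (not_lt.2 hB)
  · rw [if_neg (not_le.2 hA), if_neg (not_le.2 hB)]
    constructor
    · gcongr
    · have e : (b + (2-2*ε))/(2-ε) - (a + (2-2*ε))/(2-ε) = (b-a)/(2-ε) := by ring
      have key : (b-a)/(2-ε) ≤ (b-a)/ε :=
        div_le_div_of_nonneg_left (by linarith) hε0 (by linarith)
      rw [e, ← div_eq_inv_mul]
      exact key

private lemma psi_phi {r : ℝ} (h0 : 0 ≤ r) : psi ε (phi ε r) = r := by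
  unfold phi psi
  split_ifs with h h1 h2
  · rw [mul_comm, mul_div_assoc, div_self hε0.ne', mul_one]
  · exact absurd (by nlinarith : ε * r ≤ ε) h1
  · exfalso; push_neg at h; nlinarith
  · have h2' : (0:ℝ) < 2 - ε := by linarith
    have e : (2-ε)*r - (2-2*ε) + (2-2*ε) = (2-ε)*r := by ring
    rw [e, mul_comm, mul_div_assoc, div_self h2'.ne', mul_one]

private lemma phi_psi {r : ℝ} (h0 : 0 ≤ r) : phi ε (psi ε r) = r := by
  have h2' : (0:ℝ) < 2 - ε := by linarith
  unfold psi phi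
  split_ifs with h h1 h2
  · rw [mul_comm, div_mul_cancel₀ _ hε0.ne']
  · exact absurd (by rw [div_le_one hε0]; exact h) h1
  · exfalso; push_neg at h; rw [div_le_one h2'] at h2; linarith
  · rw [mul_comm, div_mul_cancel₀ _ h2'.ne']
    ring

end scalar

/-- `F_ε` is Lipschitz on `Ω = closedBall 0 2` with constant at most `2 - ε`,
and it has an inverse on `Ω` that is Lipschitz with constant at most `1/ε`;
in particular `F_ε` is a bi-Lipschitz homeomorphism of `Ω`. -/
theorem Feps_biLipschitz
    (n : ℕ) (ε : ℝ) (hε0 : 0 < ε) (hε1 : ε < 1)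
    (Fe : EuclideanSpace ℝ (Fin n) → EuclideanSpace ℝ (Fin n))
    (hFe : ∀ x, Fe x =
      if ‖x‖ ≤ 1 then ε • x
      else ((2 - ε) * ‖x‖ - (2 - 2 * ε)) • (‖x‖⁻¹ • x)) :
    LipschitzOnWith (Real.toNNReal (2 - ε)) Fe (Metric.closedBall 0 2) ∧
    ∃ G : EuclideanSpace ℝ (Fin n) → EuclideanSpace ℝ (Fin n),
      Set.InvOn G Fe (Metric.closedBall 0 2) (Metric.closedBall 0 2) ∧
      LipschitzOnWith (Real.toNNReal ε)⁻¹ G (Metric.closedBall 0 2) := by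
  have h2ε : (0:ℝ) < 2 - ε := by linarith
  have hK : ((Real.toNNReal (2-ε)) : ℝ) = 2 - ε := Real.coe_toNNReal _ h2ε.le
  have hK' : (((Real.toNNReal ε)⁻¹ : NNReal) : ℝ) = ε⁻¹ := by
    rw [NNReal.coe_inv, Real.coe_toNNReal _ hε0.le]
  have hφ0 : phi ε 0 = 0 := phi_zero hε0 hε1
  have hψ0 : psi ε 0 = 0 := psi_zero hε0 hε1
  have hFe' : ∀ x, Fe x = (phi ε ‖x‖ / ‖x‖) • x := by
    intro x
    rw [hFe]
    unfold phi
    by_cases h : ‖x‖ ≤ 1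
    · rw [if_pos h, if_pos h]
      rcases eq_or_ne x 0 with rfl | hx
      · simp
      · rw [mul_div_assoc, div_self (norm_ne_zero_iff.2 hx), mul_one]
    · rw [if_neg h, if_neg h, smul_smul, div_eq_mul_inv]
  have hfun : Fe = fun x => (phi ε ‖x‖ / ‖x‖) • x := funext hFe'
  have lip1 : LipschitzOnWith (Real.toNNReal (2 - ε)) Fe (Metric.closedBall 0 2) := by
    rw [hfun]
    exact radial_lip' (phi ε) _ 2 (by norm_num)
      (fun r h0 _ => phi_nonneg hε0 hε1 h0)
      (fun r h0 _ => by rw [hK]; exact phi_le hε0 hε1 h0)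
      (fun a b ha0 _ hb0 _ => by rw [hK]; exact phi_lip hε0 hε1 ha0 hb0)
  refine ⟨lip1, fun y => (psi ε ‖y‖ / ‖y‖) • y, ⟨?_, ?_⟩, ?_⟩
  · -- LeftInvOn
    intro x hx
    simp only
    rw [hFe' x]
    rcases eq_or_ne x 0 with rfl | hx0
    · simp [hψ0]
    · have ha : 0 < ‖x‖ := norm_pos_iff.2 hx0
      have hφp : 0 < phi ε ‖x‖ := phi_pos hε0 hε1 ha
      have hn : ‖(phi ε ‖x‖ / ‖x‖) • x‖ = phi ε ‖x‖ :=
        radial_norm' _ hφ0 x (phi_nonneg hε0 hε1 (norm_nonneg x))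
      rw [hn, smul_smul, psi_phi hε0 hε1 (norm_nonneg x)]
      have hc : ‖x‖ / phi ε ‖x‖ * (phi ε ‖x‖ / ‖x‖) = 1 := by field_simp
      rw [hc, one_smul]
  · -- RightInvOn
    intro y hy
    simp only
    rw [hFe' _]
    rcases eq_or_ne y 0 with rfl | hy0
    · simp [hφ0]
    · have hb : 0 < ‖y‖ := norm_pos_iff.2 hy0
      have hψp : 0 < psi ε ‖y‖ := psi_pos hε0 hε1 hb
      have hn : ‖(psi ε ‖y‖ / ‖y‖) • y‖ = psi ε ‖y‖ :=
        radial_norm' _ hψ0 y (psi_nonneg hε0 hε1 (norm_nonneg y))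
      rw [hn, smul_smul, phi_psi hε0 hε1 (norm_nonneg y)]
      have hc : ‖y‖ / psi ε ‖y‖ * (psi ε ‖y‖ / ‖y‖) = 1 := by field_simp
      rw [hc, one_smul]
  · exact radial_lip' (psi ε) _ 2 (by norm_num)
      (fun r h0 _ => psi_nonneg hε0 hε1 h0)
      (fun r h0 _ => by rw [hK']; exact psi_le hε0 hε1 h0)
      (fun a b ha0 _ hb0 _ => by rw [hK']; exact psi_lip hε0 hε1 ha0 hb0)
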